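/- Define S_m = D_{m+1} − D_m. Then for every j ≥ 0 one has 0 ≤ S_j ≤ p−2; moreover, every value in {0, 1, …, p−2} is attained by the sequence (S_j)_{j≥0}. -/

import Mathlib

open MeasureTheory
open scoped NNReal ENNReal

namespace Chacon

/-- The space of digit sequences with digits in `{0, …, p-1}`. -/
def Gamma (p : ℕ) : Set (ℕ → ℕ) := {x | ∀ i, x i < p}

/-- `Γ*`: sequences with digits `< p` having infinitely many coordinates `≠ p - 1`. -/
def GammaStar (p : ℕ) : Set (ℕ → ℕ) :=
  {x | (∀ i, x i < p) ∧ {i | x i ≠ p - 1}.Infinite}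

/-- The least index `i` with `x i ≠ p - 1`. -/
noncomputable def firstNot (p : ℕ) (x : ℕ → ℕ) : ℕ :=
  sInf {i | x i ≠ p - 1}

/-- `φ(x) = x_i` where `i` is the least index with `x_i ≠ p - 1`. -/
noncomputable def phi (p : ℕ) (x : ℕ → ℕ) : ℕ :=
  x (firstNot p x)

/-- The odometer `S` (addition of `1` with carry): the initial run of digits
`p - 1` is replaced by zeros, and the first digit `≠ p - 1` is increased by one. -/
noncomputable def odo (p : ℕ) (x : ℕ → ℕ) : ℕ → ℕ :=
  fun i =>
    if i < firstNot p x then 0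
    else if i = firstNot p x then x i + 1
    else x i

/-- `φ^(m)(x) = ∑_{j=0}^{m-1} φ(S^j x)`. -/
noncomputable def phiSum (p m : ℕ) (x : ℕ → ℕ) : ℕ :=
  ∑ j ∈ Finset.range m, phi p ((odo p)^[j] x)

/-- The base-`p` digit sequence of a real number `u`. -/
noncomputable def digitsOf (p : ℕ) (u : ℝ) : ℕ → ℕ :=
  fun i => (⌊u * (p : ℝ) ^ (i + 1)⌋).toNat % p

/-- `λ`: the product probability measure on digit sequences under which the
coordinates are i.i.d., uniformly distributed in `{0, …, p-1}`; it is realized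
concretely as the distribution of the base-`p` digit sequence of a uniformly
distributed random point of `[0,1)`. -/
noncomputable def lam (p : ℕ) : Measure (ℕ → ℕ) :=
  Measure.map (digitsOf p) (volume.restrict (Set.Ico (0 : ℝ) 1))

/-- `π_m(j) = λ({x : φ^(m)(x) = j})`. -/
noncomputable def pim (p m j : ℕ) : ℝ≥0∞ :=
  lam p {x | phiSum p m x = j}

/-- `P_m^p(t) = ∑_{j ≥ 0} π_m(j) t^j`, a real polynomial
(the sum is over `0 ≤ j ≤ m (p-2)` since `0 ≤ φ^(m) ≤ m (p-2)` a.s.). -/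
noncomputable def P (p m : ℕ) (t : ℝ) : ℝ :=
  ∑ j ∈ Finset.range (m * (p - 2) + 1), (pim p m j).toReal * t ^ j

/-- The `n`-th triangular number `Δ_n = n (n+1) / 2`. -/
def tri (n : ℕ) : ℕ := n * (n + 1) / 2

/-- The degree `D_m` of `P_m^p`: the largest `j` with `π_m(j) ≠ 0`. -/
noncomputable def D (p m : ℕ) : ℕ := sSup {j | pim p m j ≠ 0}

/-- The lower degree `d_m` of `P_m^p`: the least `j` with `π_m(j) ≠ 0`. -/
noncomputable def d (p m : ℕ) : ℕ := sInf {j | pim p m j ≠ 0}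


/-- digit `i` of `n` in base `p`. -/
def dig (p n i : ℕ) : ℕ := n / p ^ i % p

lemma dig_lt {p : ℕ} (hp : 0 < p) (n i : ℕ) : dig p n i < p := Nat.mod_lt _ hp

lemma dig_ne_nonempty {p : ℕ} (hp : 3 ≤ p) (n : ℕ) : {i | dig p n i ≠ p - 1}.Nonempty := by
  refine ⟨n, ?_⟩
  have h1 : n < p ^ n := Nat.lt_pow_self (n := n) (by omega)
  simp only [Set.mem_setOf_eq, dig, Nat.div_eq_of_lt h1, Nat.zero_mod]
  omega

/-- index of first digit of `n` not equal to `p-1`. -/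
noncomputable def fN (p n : ℕ) : ℕ := sInf {i | dig p n i ≠ p - 1}

/-- first digit of `n` (base `p`) not equal to `p-1`. -/
noncomputable def phifin (p n : ℕ) : ℕ := dig p n (fN p n)

lemma fN_spec {p : ℕ} (hp : 3 ≤ p) (n : ℕ) : dig p n (fN p n) ≠ p - 1 :=
  Nat.sInf_mem (dig_ne_nonempty hp n)

lemma fN_min {p : ℕ} (n : ℕ) {i : ℕ} (h : i < fN p n) : dig p n i = p - 1 := by
  by_contra hne
  have := Nat.sInf_le (show i ∈ {i | dig p n i ≠ p - 1} from hne)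
  rw [fN] at h; omega

lemma phifin_le {p : ℕ} (hp : 3 ≤ p) (n : ℕ) : phifin p n ≤ p - 2 := by
  have h1 := fN_spec hp n
  have h2 := dig_lt (by omega : 0 < p) n (fN p n)
  unfold phifin; omega

lemma dig_zero (p n : ℕ) : dig p n 0 = n % p := by simp [dig]

lemma phifin_of_mod {p : ℕ} (hp : 3 ≤ p) {n : ℕ} (h : n % p ≠ p - 1) :
    phifin p n = n % p := by
  have h0 : fN p n = 0 := by
    have : (0 : ℕ) ∈ {i | dig p n i ≠ p - 1} := by simpa [dig_zero] using h
    exact Nat.sInf_eq_zero.mpr (Or.inl this)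
  rw [phifin, h0, dig_zero]

lemma digit_sum_lt {p : ℕ} (hp : 0 < p) (x : ℕ → ℕ) (hx : ∀ i, x i < p) (K : ℕ) :
    ∑ j ∈ Finset.range K, x j * p ^ j < p ^ K := by
  induction K with
  | zero => simp
  | succ K ih =>
    rw [Finset.sum_range_succ, pow_succ]
    have h1 : x K * p ^ K ≤ (p - 1) * p ^ K :=
      Nat.mul_le_mul_right _ (by have := hx K; omega)
    have h2 : (p - 1) * p ^ K + p ^ K = p ^ K * p := by
      have h3 : p - 1 + 1 = p := Nat.succ_pred_eq_of_pos hp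
      calc (p - 1) * p ^ K + p ^ K = (p - 1 + 1) * p ^ K := by ring
        _ = p ^ K * p := by rw [h3]; ring
    omega

lemma dig_sum {p : ℕ} (hp : 0 < p) :
    ∀ (K : ℕ) (x : ℕ → ℕ), (∀ i, x i < p) → ∀ i ≤ K,
      dig p (∑ j ∈ Finset.range (K + 1), x j * p ^ j) i = x i := by
  intro K
  induction K with
  | zero =>
    intro x hx i hi
    interval_cases i
    simp [dig, Nat.mod_eq_of_lt (hx 0)]
  | succ K ih =>
    intro x hx i hi
    have hsplit : ∑ j ∈ Finset.range (K + 2), x j * p ^ j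
        = x 0 + p * ∑ j ∈ Finset.range (K + 1), x (j + 1) * p ^ j := by
      rw [Finset.sum_range_succ' (fun j => x j * p ^ j) (K + 1), Finset.mul_sum]
      simp only [pow_zero, mul_one, pow_succ]
      rw [add_comm]
      congr 1
      refine Finset.sum_congr rfl fun j _ => by ring
    rw [hsplit]
    match i with
    | 0 =>
      simp only [dig, pow_zero, Nat.div_one]
      rw [Nat.add_mul_mod_self_left, Nat.mod_eq_of_lt (hx 0)]
    | i + 1 =>
      have h1 : (x 0 + p * ∑ j ∈ Finset.range (K + 1), x (j + 1) * p ^ j) / p ^ (i + 1)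
          = (∑ j ∈ Finset.range (K + 1), x (j + 1) * p ^ j) / p ^ i := by
        rw [pow_succ', ← Nat.div_div_eq_div_mul]
        congr 1
        rw [Nat.add_mul_div_left _ _ hp, Nat.div_eq_of_lt (hx 0), zero_add]
      have h2 := ih (fun j => x (j + 1)) (fun j => hx (j + 1)) i (by omega)
      simp only [dig] at h2 ⊢
      rw [h1, h2]

lemma mod_pow_succ' {p : ℕ} (hp : 0 < p) (n K : ℕ) :
    n % p ^ (K + 1) = n % p ^ K + dig p n K * p ^ K := by
  -- n % p^{K+1} = (n / p^K % p) * p^K + n % p^K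
  conv_lhs => rw [← Nat.mod_add_div n (p ^ K)]
  rw [pow_succ]
  have h1 : (n % p ^ K + p ^ K * (n / p ^ K)) % (p ^ K * p)
      = (n % p ^ K + p ^ K * (n / p ^ K % p)) % (p ^ K * p) := by
    conv_lhs => rw [← Nat.mod_add_div (n / p ^ K) p]
    rw [Nat.mul_add, ← Nat.add_assoc, Nat.mul_left_comm]
    have he : p * (p ^ K * (n / p ^ K / p)) = (n / p ^ K / p) * (p ^ K * p) := by ring
    rw [he, Nat.add_mul_mod_self_right]
  rw [h1, Nat.mod_eq_of_lt]
  · rw [dig]; ring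
  · have h2 : n % p ^ K < p ^ K := Nat.mod_lt _ (Nat.pow_pos hp)
    have h3 : n / p ^ K % p ≤ p - 1 := by have := Nat.mod_lt (n / p ^ K) hp; omega
    have h4 : p ^ K * (n / p ^ K % p) ≤ p ^ K * (p - 1) := Nat.mul_le_mul_left _ h3
    have h5 : p ^ K * (p - 1) + p ^ K = p ^ K * p := by
      have h3 : p - 1 + 1 = p := Nat.succ_pred_eq_of_pos hp
      calc p ^ K * (p - 1) + p ^ K = p ^ K * (p - 1 + 1) := by ring
        _ = p ^ K * p := by rw [h3]
    omega

lemma mod_eq_sum_dig {p : ℕ} (hp : 0 < p) (n : ℕ) :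
    ∀ K, n % p ^ K = ∑ i ∈ Finset.range K, dig p n i * p ^ i := by
  intro K
  induction K with
  | zero => simp [Nat.mod_one]
  | succ K ih => rw [mod_pow_succ' hp, ih, Finset.sum_range_succ]

lemma sum_pm1 {p : ℕ} (hp : 0 < p) (K : ℕ) :
    ∑ i ∈ Finset.range K, (p - 1) * p ^ i = p ^ K - 1 := by
  induction K with
  | zero => simp
  | succ K ih =>
    rw [Finset.sum_range_succ, ih, pow_succ]
    have h1 : 0 < p ^ K := Nat.pow_pos hp
    have h5 : p ^ K * (p - 1) + p ^ K = p ^ K * p := by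
      have h3 : p - 1 + 1 = p := Nat.succ_pred_eq_of_pos hp
      calc p ^ K * (p - 1) + p ^ K = p ^ K * (p - 1 + 1) := by ring
        _ = p ^ K * p := by rw [h3]
    have : (p - 1) * p ^ K = p ^ K * (p - 1) := by ring
    omega

lemma exists_dig_ne {p : ℕ} (hp : 3 ≤ p) {n K : ℕ} (h : n + 1 < p ^ (K + 1)) :
    ∃ i ≤ K, dig p n i ≠ p - 1 := by
  by_contra hc
  push_neg at hc
  have hall : ∀ i ∈ Finset.range (K + 1), dig p n i * p ^ i = (p - 1) * p ^ i := by
    intro i hi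
    rw [hc i (by simpa using Nat.lt_succ_iff.mp (Finset.mem_range.mp hi))]
  have h1 : n % p ^ (K + 1) = p ^ (K + 1) - 1 := by
    rw [mod_eq_sum_dig (by omega : 0 < p) n (K + 1), Finset.sum_congr rfl hall,
      sum_pm1 (by omega : 0 < p)]
  have h2 : n % p ^ (K + 1) = n := Nat.mod_eq_of_lt (by omega)
  omega

lemma dig_succ {p : ℕ} (hp : 3 ≤ p) (n : ℕ) :
    (∀ i < fN p n, dig p (n + 1) i = 0) ∧
    dig p (n + 1) (fN p n) = dig p n (fN p n) + 1 ∧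
    (∀ i, fN p n < i → dig p (n + 1) i = dig p n i) := by
  have hp0 : 0 < p := by omega
  set f := fN p n with hf
  have hmodf : n % p ^ f = p ^ f - 1 := by
    rw [mod_eq_sum_dig hp0 n f]
    rw [Finset.sum_congr rfl (fun i hi => by
      rw [fN_min (p := p) (n := n) (Finset.mem_range.mp hi)])]
    exact sum_pm1 hp0 f
  have hpf : 0 < p ^ f := Nat.pow_pos hp0
  have hkey : n + 1 = (n / p ^ f + 1) * p ^ f := by
    have := Nat.mod_add_div n (p ^ f)
    calc n + 1 = n % p ^ f + p ^ f * (n / p ^ f) + 1 := by rw [this]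
      _ = (n / p ^ f + 1) * p ^ f := by
          rw [hmodf]
          have hx : (n / p ^ f + 1) * p ^ f = p ^ f * (n / p ^ f) + p ^ f := by ring
          omega
  have hdigf : dig p n f ≤ p - 2 := by
    have h1 := fN_spec hp n
    rw [← hf] at h1
    have h2 := dig_lt hp0 n f
    omega
  refine ⟨?_, ?_, ?_⟩
  · intro i hi
    have hdvd : p ^ f = p ^ (f - i) * p ^ i := by
      rw [← pow_add]; congr 1; omega
    have h1 : (n + 1) / p ^ i = (n / p ^ f + 1) * p ^ (f - i) := by
      rw [hkey, hdvd, ← Nat.mul_assoc, Nat.mul_div_cancel _ (Nat.pow_pos hp0)]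
    have h2 : p ∣ p ^ (f - i) := dvd_pow_self p (by omega)
    rw [dig, h1]
    obtain ⟨c, hc⟩ := h2
    have he : (n / p ^ f + 1) * (p * c) = p * ((n / p ^ f + 1) * c) := by ring
    rw [hc, he, Nat.mul_mod_right]
  · have h1 : (n + 1) / p ^ f = n / p ^ f + 1 := by
      rw [hkey, Nat.mul_div_cancel _ hpf]
    rw [dig, dig, h1]
    -- (a + 1) % p = a % p + 1 since a % p ≤ p - 2
    have ha : n / p ^ f % p ≤ p - 2 := by
      have : dig p n f = n / p ^ f % p := rfl
      omega
    conv_lhs => rw [← Nat.mod_add_div (n / p ^ f) p]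
    rw [Nat.add_right_comm, Nat.add_mul_mod_self_left]
    exact Nat.mod_eq_of_lt (by omega)
  · intro i hif
    have hmodf1 : n % p ^ (f + 1) + 1 < p ^ (f + 1) := by
      have h1 : n % p ^ (f + 1) = p ^ f - 1 + dig p n f * p ^ f := by
        rw [mod_eq_sum_dig hp0 n (f + 1), Finset.sum_range_succ,
          ← mod_eq_sum_dig hp0 n f, hmodf]
      have h2 : dig p n f * p ^ f ≤ (p - 2) * p ^ f := Nat.mul_le_mul_right _ hdigf
      have h3 : p ^ (f + 1) = p ^ f * p := pow_succ p f
      have hq2 : p - 2 + 2 = p := by omega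
      have h4 : (p - 2) * p ^ f + 2 * p ^ f = p ^ f * p := by
        calc (p - 2) * p ^ f + 2 * p ^ f = (p - 2 + 2) * p ^ f := by ring
          _ = p ^ f * p := by rw [hq2]; ring
      omega
    have hdiv : (n + 1) / p ^ (f + 1) = n / p ^ (f + 1) := by
      conv_lhs => rw [← Nat.mod_add_div n (p ^ (f + 1))]
      rw [Nat.add_right_comm, Nat.add_mul_div_left _ _ (Nat.pow_pos hp0),
        Nat.div_eq_of_lt hmodf1, Nat.zero_add]
    have hsplit : ∀ m : ℕ, m / p ^ i = m / p ^ (f + 1) / p ^ (i - f - 1) := by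
      intro m
      rw [Nat.div_div_eq_div_mul, ← pow_add]
      congr 2
      omega
    rw [dig, dig, hsplit (n + 1), hsplit n, hdiv]

noncomputable def W (p m n : ℕ) : ℕ := ∑ j ∈ Finset.range m, phifin p (n + j)

lemma fN_le_of_agree {p : ℕ} (hp : 3 ≤ p) {x : ℕ → ℕ} {n K : ℕ}
    (hagree : ∀ i ≤ K, x i = dig p n i) (hK : n + 1 < p ^ (K + 1)) :
    firstNot p x = fN p n ∧ fN p n ≤ K := by
  obtain ⟨i0, hi0K, hi0⟩ := exists_dig_ne hp hK
  have hfK : fN p n ≤ K := Nat.sInf_le hi0 |>.trans hi0K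
  have hmem : fN p n ∈ {i | x i ≠ p - 1} := by
    have := fN_spec hp n
    simp only [Set.mem_setOf_eq, hagree _ hfK]
    exact this
  constructor
  · apply le_antisymm
    · exact Nat.sInf_le hmem
    · -- every i < fN p n is not in the set
      by_contra hlt
      push_neg at hlt
      have hmem2 : x (firstNot p x) ≠ p - 1 :=
        Nat.sInf_mem (⟨_, hmem⟩ : {i | x i ≠ p - 1}.Nonempty)
      have hd : dig p n (firstNot p x) = p - 1 := fN_min n hlt
      rw [hagree _ (by omega : firstNot p x ≤ K), hd] at hmem2
      exact hmem2 rfl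
  · exact hfK

lemma phi_eq {p : ℕ} (hp : 3 ≤ p) {x : ℕ → ℕ} {n K : ℕ}
    (hagree : ∀ i ≤ K, x i = dig p n i) (hK : n + 1 < p ^ (K + 1)) :
    phi p x = phifin p n := by
  obtain ⟨h1, h2⟩ := fN_le_of_agree hp hagree hK
  rw [phi, phifin, h1, hagree _ h2]

lemma odo_lt {p : ℕ} (hp : 3 ≤ p) {x : ℕ → ℕ} {n K : ℕ} (hx : ∀ i, x i < p)
    (hagree : ∀ i ≤ K, x i = dig p n i) (hK : n + 1 < p ^ (K + 1)) :
    ∀ i, odo p x i < p := by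
  obtain ⟨h1, h2⟩ := fN_le_of_agree hp hagree hK
  intro i
  rw [odo]
  split
  · omega
  · split
    · rename_i h3 h4
      subst h4
      rw [h1] at *
      have h5 : x (fN p n) = dig p n (fN p n) := hagree _ h2
      have h6 := fN_spec hp n
      have h7 := dig_lt (by omega : 0 < p) n (fN p n)
      omega
    · exact hx i

lemma odo_agree {p : ℕ} (hp : 3 ≤ p) {x : ℕ → ℕ} {n K : ℕ}
    (hagree : ∀ i ≤ K, x i = dig p n i) (hK : n + 1 < p ^ (K + 1)) :
    ∀ i ≤ K, odo p x i = dig p (n + 1) i := by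
  obtain ⟨h1, h2⟩ := fN_le_of_agree hp hagree hK
  obtain ⟨hs1, hs2, hs3⟩ := dig_succ hp n
  intro i hi
  rw [odo, h1]
  rcases lt_trichotomy i (fN p n) with h | h | h
  · rw [if_pos h, hs1 i h]
  · subst h
    rw [if_neg (lt_irrefl _), if_pos rfl, hs2, hagree _ h2]
  · rw [if_neg (by omega), if_neg (by omega), hs3 i h, hagree i hi]

lemma phiSum_eq {p : ℕ} (hp : 3 ≤ p) :
    ∀ (m : ℕ) (x : ℕ → ℕ) (n K : ℕ), (∀ i, x i < p) →
      (∀ i ≤ K, x i = dig p n i) → n + m < p ^ (K + 1) →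
      phiSum p m x = W p m n := by
  intro m
  induction m with
  | zero => intro x n K _ _ _; simp [phiSum, W]
  | succ m ih =>
    intro x n K hx hagree hK
    have hK1 : n + 1 < p ^ (K + 1) := by omega
    have hstep : phiSum p (m + 1) x = phi p x + phiSum p m (odo p x) := by
      rw [phiSum, Finset.sum_range_succ' (fun j => phi p ((odo p)^[j] x)) m]
      simp only [Function.iterate_succ_apply, Function.iterate_zero_apply]
      rw [Nat.add_comm, phiSum]
    have hWstep : W p (m + 1) n = phifin p n + W p m (n + 1) := by
      rw [W, Finset.sum_range_succ' (fun j => phifin p (n + j)) m]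
      simp only [Nat.add_zero]
      rw [Nat.add_comm, W]
      congr 1
      refine Finset.sum_congr rfl fun j _ => by ring_nf
    rw [hstep, hWstep, phi_eq hp hagree hK1,
      ih (odo p x) (n + 1) K (odo_lt hp hx hagree hK1) (odo_agree hp hagree hK1) (by omega)]

lemma phiSum_exists {p : ℕ} (hp : 3 ≤ p) {x : ℕ → ℕ} (hx : ∀ i, x i < p)
    (hinf : {i | x i ≠ p - 1}.Infinite) (m : ℕ) : ∃ n, phiSum p m x = W p m n := by
  obtain ⟨K, hKmem, hKm⟩ := hinf.exists_gt m
  set n := ∑ j ∈ Finset.range (K + 1), x j * p ^ j with hn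
  refine ⟨n, phiSum_eq hp m x n K hx (fun i hi => (dig_sum (by omega) K x hx i hi).symm) ?_⟩
  -- n + m < p ^ (K + 1)
  have h1 : ∑ j ∈ Finset.range K, x j * p ^ j < p ^ K := digit_sum_lt (by omega) x hx K
  have h2 : x K ≤ p - 2 := by
    have h3 : x K ≠ p - 1 := hKmem
    have := hx K
    omega
  have h4 : n = ∑ j ∈ Finset.range K, x j * p ^ j + x K * p ^ K := by
    rw [hn, Finset.sum_range_succ]
  have h5 : x K * p ^ K ≤ (p - 2) * p ^ K := Nat.mul_le_mul_right _ h2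
  have h6 : m < p ^ K := lt_of_lt_of_le hKm (Nat.le_of_lt (Nat.lt_pow_self (n := K) (by omega)))
  have h7 : p ^ (K + 1) = p ^ K * p := pow_succ p K
  have h8 : (p - 2) * p ^ K + 2 * p ^ K = p ^ K * p := by
    have hq : p - 2 + 2 = p := by omega
    calc (p - 2) * p ^ K + 2 * p ^ K = (p - 2 + 2) * p ^ K := by ring
      _ = p ^ K * p := by rw [hq]; ring
  omega

lemma digitsOf_eq_natFloor (p : ℕ) (u : ℝ) (i : ℕ) :
    digitsOf p u i = ⌊u * (p : ℝ) ^ (i + 1)⌋₊ % p := by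
  rw [digitsOf, Int.floor_toNat]

lemma digitsOf_lt {p : ℕ} (hp : 0 < p) (u : ℝ) (i : ℕ) : digitsOf p u i < p :=
  Nat.mod_lt _ hp

lemma digitsOf_infinite {p : ℕ} (hp : 3 ≤ p) {u : ℝ} (hu : u ∈ Set.Ico (0 : ℝ) 1) :
    {i | digitsOf p u i ≠ p - 1}.Infinite := by
  obtain ⟨hu0, hu1⟩ := hu
  have hp0 : (0 : ℝ) < p := by positivity
  have hp1 : (1 : ℝ) < p := by
    have : (3 : ℝ) ≤ p := by exact_mod_cast hp
    linarith
  set nn : ℕ → ℕ := fun i => ⌊u * (p : ℝ) ^ (i + 1)⌋₊ with hnn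
  have hnonneg : ∀ i, (0 : ℝ) ≤ u * (p : ℝ) ^ (i + 1) := fun i => by positivity
  have hfl : ∀ i, (nn i : ℝ) ≤ u * (p : ℝ) ^ (i + 1) := fun i => Nat.floor_le (hnonneg i)
  have hfu : ∀ i, u * (p : ℝ) ^ (i + 1) < nn i + 1 := fun i => Nat.lt_floor_add_one _
  have hdiv : ∀ i, nn (i + 1) / p = nn i := by
    intro i
    rw [hnn]
    have h1 : u * (p : ℝ) ^ (i + 1 + 1) / p = u * (p : ℝ) ^ (i + 1) := by
      field_simp
      ring
    rw [← Nat.floor_div_natCast (u * (p : ℝ) ^ (i + 1 + 1)) p, h1]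
  have hrec : ∀ i, nn (i + 1) = p * nn i + digitsOf p u (i + 1) := by
    intro i
    rw [digitsOf_eq_natFloor]
    have h0 : nn (i + 1) = ⌊u * (p : ℝ) ^ (i + 1 + 1)⌋₊ := rfl
    rw [← h0]
    have h2 := hdiv i
    have h3 := Nat.mod_add_div (nn (i + 1)) p
    rw [h2] at h3
    omega
  -- suppose only finitely many digits differ from p-1
  by_contra hfin
  rw [Set.not_infinite] at hfin
  have hbdd : BddAbove {i | digitsOf p u i ≠ p - 1} := hfin.bddAbove
  obtain ⟨N, hN⟩ := hbdd
  have hall : ∀ k, digitsOf p u (N + 1 + k) = p - 1 := by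
    intro k
    by_contra hne
    have : N + 1 + k ≤ N := hN hne
    omega
  -- nn (N + k) = p^k * (nn N + 1) - 1 : use ≥ form  p^k * (nn N + 1) ≤ nn (N + k) + 1
  have hgrow : ∀ k, p ^ k * (nn N + 1) ≤ nn (N + k) + 1 := by
    intro k
    induction k with
    | zero => simp
    | succ k ih =>
      have h1 : nn (N + k + 1) = p * nn (N + k) + (p - 1) := by
        have h2 := hrec (N + k)
        have h3 := hall k
        have h4 : N + 1 + k = N + k + 1 := by omega
        rw [h4] at h3
        omega
      have h5 : p ^ (k + 1) * (nn N + 1) = p * (p ^ k * (nn N + 1)) := by ring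
      have h6 : p * (p ^ k * (nn N + 1)) ≤ p * (nn (N + k) + 1) := Nat.mul_le_mul_left _ ih
      have h7 : N + (k + 1) = N + k + 1 := by omega
      rw [h7, h1, h5]
      have h15 : p * (nn (N + k) + 1) = p * nn (N + k) + p := by ring
      omega
  -- derive the real-number contradiction
  have hdelta : u * (p : ℝ) ^ (N + 1) < nn N + 1 := hfu N
  obtain ⟨k, hk⟩ := pow_unbounded_of_one_lt (1 / ((nn N + 1) - u * (p : ℝ) ^ (N + 1))) hp1
  -- from hgrow k : p^k (nn N + 1) - 1 ≤ nn (N+k) ≤ u p^{N+k+1}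
  have h8 : ((p ^ k * (nn N + 1) : ℕ) : ℝ) ≤ u * (p : ℝ) ^ (N + k + 1) + 1 := by
    have h9 : ((nn (N + k) : ℕ) : ℝ) ≤ u * (p : ℝ) ^ (N + k + 1) := hfl (N + k)
    have h10 := hgrow k
    have h11 : ((p ^ k * (nn N + 1) : ℕ) : ℝ) ≤ ((nn (N + k) + 1 : ℕ) : ℝ) := by
      exact_mod_cast h10
    push_cast at h11 ⊢
    push_cast at h9
    linarith
  have h12 : (p : ℝ) ^ (N + k + 1) = (p : ℝ) ^ (N + 1) * (p : ℝ) ^ k := by ring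
  have h13 : ((p ^ k * (nn N + 1) : ℕ) : ℝ) = (p : ℝ) ^ k * ((nn N : ℝ) + 1) := by
    push_cast; ring
  rw [h13, h12] at h8
  have hpk : (0 : ℝ) < (p : ℝ) ^ k := by positivity
  have hd : (0 : ℝ) < (nn N : ℝ) + 1 - u * (p : ℝ) ^ (N + 1) := by linarith
  rw [div_lt_iff₀ hd] at hk
  have h14 : ((nn N : ℝ) + 1 - u * (p : ℝ) ^ (N + 1)) * (p : ℝ) ^ k ≤ 1 := by nlinarith [h8]
  nlinarith [hk, h14]

lemma measurableSet_coord_eq (j c : ℕ) : MeasurableSet {x : ℕ → ℕ | x j = c} := by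
  show MeasurableSet ((fun x : ℕ → ℕ => x j) ⁻¹' {c})
  exact measurable_pi_apply j (MeasurableSet.singleton c)

lemma measurableSet_coord_ne (j c : ℕ) : MeasurableSet {x : ℕ → ℕ | x j ≠ c} :=
  (measurableSet_coord_eq j c).compl

lemma measurable_firstNot (p : ℕ) : Measurable (firstNot p) := by
  apply measurable_to_countable'
  intro k
  match k with
  | 0 =>
    have hdecomp : firstNot p ⁻¹' {0}
        = {x : ℕ → ℕ | x 0 ≠ p - 1} ∪ ⋂ j : ℕ, {x : ℕ → ℕ | x j = p - 1} := by
      ext x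
      simp only [Set.mem_preimage, Set.mem_singleton_iff, firstNot, Set.mem_union,
        Set.mem_setOf_eq, Set.mem_iInter]
      rw [Nat.sInf_eq_zero]
      constructor
      · rintro (h | h)
        · exact Or.inl h
        · right
          intro j
          by_contra hj
          exact absurd (Set.eq_empty_iff_forall_notMem.mp h j) (by simp [hj])
      · rintro (h | h)
        · exact Or.inl h
        · right
          ext j
          simp [h j]
    rw [hdecomp]
    exact (measurableSet_coord_ne 0 (p - 1)).union
      (MeasurableSet.iInter fun j => measurableSet_coord_eq j (p - 1))
  | k + 1 =>
    have hdecomp : firstNot p ⁻¹' {k + 1}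
        = {x : ℕ → ℕ | x (k + 1) ≠ p - 1} ∩ ⋂ j : ℕ, ⋂ _ : j ≤ k, {x : ℕ → ℕ | x j = p - 1} := by
      ext x
      simp only [Set.mem_preimage, Set.mem_singleton_iff, firstNot, Set.mem_inter_iff,
        Set.mem_setOf_eq, Set.mem_iInter]
      constructor
      · intro h
        have hne : {i | x i ≠ p - 1}.Nonempty := by
          by_contra hemp
          rw [Set.not_nonempty_iff_eq_empty] at hemp
          rw [hemp, Nat.sInf_empty] at h
          omega
        have hmem := Nat.sInf_mem hne
        rw [h] at hmem
        refine ⟨hmem, fun j hj => ?_⟩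
        by_contra hj2
        have := Nat.sInf_le (show j ∈ {i | x i ≠ p - 1} from hj2)
        omega
      · rintro ⟨h1, h2⟩
        apply le_antisymm
        · exact Nat.sInf_le h1
        · by_contra hlt
          push_neg at hlt
          have hmem := Nat.sInf_mem (⟨k + 1, h1⟩ : {i | x i ≠ p - 1}.Nonempty)
          exact hmem (h2 _ (by omega))
    rw [hdecomp]
    exact (measurableSet_coord_ne (k + 1) (p - 1)).inter
      (MeasurableSet.iInter fun j => MeasurableSet.iInter fun _ =>
        measurableSet_coord_eq j (p - 1))

lemma measurable_phi (p : ℕ) : Measurable (phi p) := by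
  apply measurable_to_countable'
  intro c
  have hdecomp : phi p ⁻¹' {c} = ⋃ k : ℕ, (firstNot p ⁻¹' {k} ∩ {x : ℕ → ℕ | x k = c}) := by
    ext x
    simp only [Set.mem_preimage, Set.mem_singleton_iff, Set.mem_iUnion, Set.mem_inter_iff,
      Set.mem_setOf_eq, phi]
    constructor
    · intro h; exact ⟨firstNot p x, rfl, h⟩
    · rintro ⟨k, hk, hc⟩; rw [hk]; exact hc
  rw [hdecomp]
  exact MeasurableSet.iUnion fun k =>
    (measurable_firstNot p (MeasurableSet.singleton k)).inter (measurableSet_coord_eq k c)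

lemma measurable_odo (p : ℕ) : Measurable (odo p) := by
  apply measurable_pi_lambda
  intro i
  apply measurable_to_countable'
  intro c
  have hdecomp : (fun x => odo p x i) ⁻¹' {c}
      = ⋃ k : ℕ, (firstNot p ⁻¹' {k}
          ∩ {x : ℕ → ℕ | (if i < k then 0 else if i = k then x i + 1 else x i) = c}) := by
    ext x
    simp only [Set.mem_preimage, Set.mem_singleton_iff, Set.mem_iUnion, Set.mem_inter_iff,
      Set.mem_setOf_eq, odo]
    constructor
    · intro h; exact ⟨firstNot p x, rfl, h⟩
    · rintro ⟨k, hk, hc⟩; rw [hk]; exact hc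
  rw [hdecomp]
  refine MeasurableSet.iUnion fun k => (measurable_firstNot p (MeasurableSet.singleton k)).inter ?_
  by_cases h1 : i < k
  · simp only [if_pos h1]
    by_cases h2 : (0 : ℕ) = c
    · simp only [h2]; exact MeasurableSet.univ.congr (by ext x; simp)
    · have : {x : ℕ → ℕ | (0 : ℕ) = c} = ∅ := by ext x; simp [h2]
      rw [this]; exact MeasurableSet.empty
  · by_cases h2 : i = k
    · simp only [if_neg h1, if_pos h2]
      have : {x : ℕ → ℕ | x i + 1 = c} = {x : ℕ → ℕ | x i = c - 1} ∩ {x : ℕ → ℕ | 1 ≤ c} := by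
        ext x; simp only [Set.mem_setOf_eq, Set.mem_inter_iff]; omega
      rw [this]
      refine (measurableSet_coord_eq i (c - 1)).inter ?_
      by_cases h3 : 1 ≤ c
      · exact MeasurableSet.univ.congr (by ext x; simp [h3])
      · have : {x : ℕ → ℕ | 1 ≤ c} = ∅ := by ext x; simp [h3]
        rw [this]; exact MeasurableSet.empty
    · simp only [if_neg h1, if_neg h2]
      exact measurableSet_coord_eq i c

lemma measurable_phiSum (p m : ℕ) : Measurable (phiSum p m) := by
  unfold phiSum
  apply Finset.measurable_sum
  intro j _
  exact (measurable_phi p).comp ((measurable_odo p).iterate j)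

lemma measurable_digitsOf (p : ℕ) : Measurable (digitsOf p) := by
  apply measurable_pi_lambda
  intro i
  have h1 : Measurable fun u : ℝ => u * (p : ℝ) ^ (i + 1) :=
    measurable_id.mul_const _
  exact (measurable_from_top : Measurable fun z : ℤ => z.toNat % p).comp
    (Int.measurable_floor.comp h1)

lemma floor_in_cylinder {p : ℕ} (hp : 3 ≤ p) {rev K : ℕ} {u : ℝ}
    (hu : (rev : ℝ) / (p : ℝ) ^ (K + 1) ≤ u) (hu2 : u < ((rev : ℝ) + 1) / (p : ℝ) ^ (K + 1))
    {i : ℕ} (hi : i ≤ K) :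
    ⌊u * (p : ℝ) ^ (i + 1)⌋₊ = rev / p ^ (K - i) := by
  have hp0 : (0 : ℝ) < p := by exact_mod_cast (by omega : 0 < p)
  set M : ℕ := p ^ (K - i) with hM
  have hM0 : 0 < M := Nat.pow_pos (by omega)
  have hM0' : (0 : ℝ) < (M : ℝ) := by exact_mod_cast hM0
  have hpi : (0 : ℝ) < (p : ℝ) ^ (i + 1) := by positivity
  have hsplit : (p : ℝ) ^ (K + 1) = (M : ℝ) * (p : ℝ) ^ (i + 1) := by
    rw [hM]
    push_cast
    rw [← pow_add]
    congr 1
    omega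
  set q : ℕ := rev / M with hq
  have hq1 : (q : ℝ) ≤ (rev : ℝ) / M := by
    rw [hq]; exact_mod_cast Nat.cast_div_le
  have hq2 : rev + 1 ≤ M * (q + 1) := Nat.lt_mul_div_succ rev hM0
  have hq2' : ((rev : ℝ) + 1) / M ≤ (q : ℝ) + 1 := by
    rw [div_le_iff₀ hM0']
    have : ((rev : ℝ) + 1) ≤ ((M * (q + 1) : ℕ) : ℝ) := by exact_mod_cast hq2
    push_cast at this
    linarith
  have hnonneg : 0 ≤ u * (p : ℝ) ^ (i + 1) := by
    have h0 : (0 : ℝ) ≤ (rev : ℝ) / (p : ℝ) ^ (K + 1) := by positivity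
    nlinarith
  rw [Nat.floor_eq_iff hnonneg]
  constructor
  · calc (q : ℝ) ≤ (rev : ℝ) / M := hq1
      _ = (rev : ℝ) / (p : ℝ) ^ (K + 1) * (p : ℝ) ^ (i + 1) := by
          rw [hsplit]; field_simp
      _ ≤ u * (p : ℝ) ^ (i + 1) := by nlinarith
  · calc u * (p : ℝ) ^ (i + 1) < ((rev : ℝ) + 1) / (p : ℝ) ^ (K + 1) * (p : ℝ) ^ (i + 1) := by
          nlinarith
      _ = ((rev : ℝ) + 1) / M := by rw [hsplit]; field_simp
      _ ≤ (q : ℝ) + 1 := hq2'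

lemma pim_eq (p m j : ℕ) :
    pim p m j = volume (digitsOf p ⁻¹' {x | phiSum p m x = j} ∩ Set.Ico (0 : ℝ) 1) := by
  have hms : MeasurableSet {x : ℕ → ℕ | phiSum p m x = j} :=
    measurable_phiSum p m (MeasurableSet.singleton j)
  rw [pim, lam, Measure.map_apply (measurable_digitsOf p) hms,
    Measure.restrict_apply (measurable_digitsOf p hms)]

lemma pim_ne_zero_of_W {p : ℕ} (hp : 3 ≤ p) (m n : ℕ) : pim p m (W p m n) ≠ 0 := by
  have hp0 : 0 < p := by omega
  set K := n + m with hK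
  have hpK : (0 : ℝ) < (p : ℝ) ^ (K + 1) := by positivity
  set rev := ∑ i ∈ Finset.range (K + 1), dig p n (K - i) * p ^ i with hrev
  have hrevlt : rev < p ^ (K + 1) :=
    digit_sum_lt hp0 (fun i => dig p n (K - i)) (fun i => dig_lt hp0 n (K - i)) (K + 1)
  have hnm : n + m < p ^ (K + 1) := by
    have h1 : K < p ^ K := Nat.lt_pow_self (n := K) (by omega)
    have h2 : p ^ K ≤ p ^ (K + 1) := Nat.pow_le_pow_right (by omega) (by omega)
    omega
  set I := Set.Ico ((rev : ℝ) / (p : ℝ) ^ (K + 1)) (((rev : ℝ) + 1) / (p : ℝ) ^ (K + 1)) with hI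
  have hIsub : I ⊆ digitsOf p ⁻¹' {x | phiSum p m x = W p m n} ∩ Set.Ico (0 : ℝ) 1 := by
    intro u hu
    obtain ⟨hu1, hu2⟩ := hu
    have hagree : ∀ i ≤ K, digitsOf p u i = dig p n i := by
      intro i hi
      rw [digitsOf_eq_natFloor, floor_in_cylinder hp hu1 hu2 hi]
      have h3 : rev / p ^ (K - i) % p = dig p rev (K - i) := rfl
      rw [h3, hrev, dig_sum hp0 K (fun j => dig p n (K - j))
        (fun j => dig_lt hp0 n (K - j)) (K - i) (by omega)]
      congr 1
      omega
    constructor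
    · show phiSum p m (digitsOf p u) = W p m n
      exact phiSum_eq hp m (digitsOf p u) n K (digitsOf_lt hp0 u)
        (fun i hi => hagree i hi) hnm
    · constructor
      · calc (0 : ℝ) ≤ (rev : ℝ) / (p : ℝ) ^ (K + 1) := by positivity
          _ ≤ u := hu1
      · calc u < ((rev : ℝ) + 1) / (p : ℝ) ^ (K + 1) := hu2
          _ ≤ 1 := by
            rw [div_le_one hpK]
            have : (rev : ℝ) + 1 ≤ ((p ^ (K + 1) : ℕ) : ℝ) := by exact_mod_cast hrevlt
            push_cast at this ⊢
            linarith
  rw [pim_eq]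
  intro hzero
  have hle : volume I ≤ volume (digitsOf p ⁻¹' {x | phiSum p m x = W p m n}
      ∩ Set.Ico (0 : ℝ) 1) := measure_mono hIsub
  rw [hzero] at hle
  have hvol : volume I = ENNReal.ofReal (((rev : ℝ) + 1) / (p : ℝ) ^ (K + 1)
      - (rev : ℝ) / (p : ℝ) ^ (K + 1)) := Real.volume_Ico
  have hpos : (0 : ℝ) < ((rev : ℝ) + 1) / (p : ℝ) ^ (K + 1) - (rev : ℝ) / (p : ℝ) ^ (K + 1) := by
    rw [div_sub_div_same]
    have : ((rev : ℝ) + 1) - rev = 1 := by ring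
    rw [this]
    positivity
  rw [hvol] at hle
  have h2 := ENNReal.ofReal_pos.mpr hpos
  exact absurd (le_antisymm hle (zero_le)) h2.ne'

lemma pim_ne_zero_imp {p : ℕ} (hp : 3 ≤ p) (m j : ℕ) (h : pim p m j ≠ 0) :
    ∃ n, j = W p m n := by
  rw [pim_eq] at h
  have hne : (digitsOf p ⁻¹' {x | phiSum p m x = j} ∩ Set.Ico (0 : ℝ) 1).Nonempty := by
    by_contra hemp
    rw [Set.not_nonempty_iff_eq_empty] at hemp
    rw [hemp, measure_empty] at h
    exact h rfl
  obtain ⟨u, hu1, hu2⟩ := hne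
  have hx : phiSum p m (digitsOf p u) = j := hu1
  obtain ⟨n, hn⟩ := phiSum_exists hp (digitsOf_lt (by omega) u) (digitsOf_infinite hp hu2) m
  exact ⟨n, by rw [← hx, hn]⟩

lemma pim_support {p : ℕ} (hp : 3 ≤ p) (m : ℕ) :
    {j | pim p m j ≠ 0} = Set.range (W p m) := by
  ext j
  simp only [Set.mem_setOf_eq, Set.mem_range]
  constructor
  · intro h
    obtain ⟨n, hn⟩ := pim_ne_zero_imp hp m j h
    exact ⟨n, hn.symm⟩
  · rintro ⟨n, rfl⟩
    exact pim_ne_zero_of_W hp m n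

lemma sum_subset_range : ∀ (N : ℕ) (s : Finset ℕ), s ⊆ Finset.range N →
    ∑ v ∈ s, v ≤ ∑ j ∈ Finset.range s.card, (N - 1 - j) := by
  intro N
  induction N with
  | zero =>
    intro s hs
    have : s = ∅ := Finset.subset_empty.mp (by simpa using hs)
    subst this
    simp
  | succ N ih =>
    intro s hs
    by_cases hN : N ∈ s
    · have hs' : s.erase N ⊆ Finset.range N := by
        intro v hv
        have h1 := Finset.mem_of_mem_erase hv
        have h2 := Finset.ne_of_mem_erase hv
        have h3 := Finset.mem_range.mp (hs h1)
        exact Finset.mem_range.mpr (by omega)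
      have hcard : s.card = (s.erase N).card + 1 := by
        rw [Finset.card_erase_of_mem hN]
        have : 1 ≤ s.card := Finset.card_pos.mpr ⟨N, hN⟩
        omega
      have hsum : ∑ v ∈ s, v = N + ∑ v ∈ s.erase N, v :=
        (Finset.add_sum_erase s id hN).symm
      rw [hsum, hcard]
      have hre : ∑ j ∈ Finset.range ((s.erase N).card + 1), (N + 1 - 1 - j)
          = N + ∑ j ∈ Finset.range (s.erase N).card, (N - 1 - j) := by
        rw [Finset.sum_range_succ' (fun j => N + 1 - 1 - j) (s.erase N).card]
        simp only [Nat.add_sub_cancel, Nat.sub_zero]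
        rw [Nat.add_comm]
        congr 1
        refine Finset.sum_congr rfl fun j _ => by omega
      rw [hre]
      exact Nat.add_le_add_left (ih _ hs') N
    · have hs' : s ⊆ Finset.range N := by
        intro v hv
        have h3 := Finset.mem_range.mp (hs hv)
        have : v ≠ N := fun h => hN (h ▸ hv)
        exact Finset.mem_range.mpr (by omega)
      calc ∑ v ∈ s, v ≤ ∑ j ∈ Finset.range s.card, (N - 1 - j) := ih _ hs'
        _ ≤ ∑ j ∈ Finset.range s.card, (N + 1 - 1 - j) :=
          Finset.sum_le_sum fun j _ => by omega

noncomputable def F (p m : ℕ) : ℕ := (p - 2) + ∑ j ∈ Finset.range (m - 1), (p - 2 - j)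

lemma res_inj {p m n : ℕ} (hmp : m ≤ p) {a b : ℕ} (ha : a < m) (hb : b < m)
    (h : (n + a) % p = (n + b) % p) : a = b := by
  have h2 : a ≡ b [MOD p] := Nat.ModEq.add_left_cancel' n h
  have h3 : a % p = b % p := h2
  rw [Nat.mod_eq_of_lt (ha.trans_le hmp), Nat.mod_eq_of_lt (hb.trans_le hmp)] at h3
  exact h3

lemma W_le_F {p : ℕ} (hp : 3 ≤ p) {m : ℕ} (hm1 : 1 ≤ m) (hmp : m ≤ p) (n : ℕ) :
    W p m n ≤ F p m := by
  classical
  set s := (Finset.range m).filter (fun j => (n + j) % p = p - 1) with hs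
  set t := (Finset.range m).filter (fun j => ¬((n + j) % p = p - 1)) with ht
  have hsplit : ∑ j ∈ s, phifin p (n + j) + ∑ j ∈ t, phifin p (n + j) = W p m n :=
    Finset.sum_filter_add_sum_filter_not _ _ _
  have hcards : s.card + t.card = m := by
    rw [hs, ht]
    rw [Finset.card_filter_add_card_filter_not]
    exact Finset.card_range m
  have hscard : s.card ≤ 1 := by
    rw [Finset.card_le_one]
    intro a ha b hb
    rw [hs, Finset.mem_filter, Finset.mem_range] at ha hb
    exact res_inj hmp ha.1 hb.1 (ha.2.trans hb.2.symm)
  have hsum_s : ∑ j ∈ s, phifin p (n + j) ≤ (p - 2) * s.card := by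
    calc ∑ j ∈ s, phifin p (n + j) ≤ ∑ j ∈ s, (p - 2) :=
        Finset.sum_le_sum fun j _ => phifin_le hp _
      _ = (p - 2) * s.card := by rw [Finset.sum_const, smul_eq_mul, Nat.mul_comm]
  have hinj : Set.InjOn (fun j => (n + j) % p) t := by
    intro a ha b hb hab
    rw [ht, Finset.coe_filter, Set.mem_setOf_eq] at ha hb
    exact res_inj hmp (Finset.mem_range.mp ha.1) (Finset.mem_range.mp hb.1) hab
  have hsum_t : ∑ j ∈ t, phifin p (n + j) = ∑ v ∈ t.image (fun j => (n + j) % p), v := by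
    rw [Finset.sum_image (fun a ha b hb => hinj ha hb)]
    refine Finset.sum_congr rfl fun j hj => ?_
    rw [ht, Finset.mem_filter] at hj
    exact phifin_of_mod hp hj.2
  have himsub : t.image (fun j => (n + j) % p) ⊆ Finset.range (p - 1) := by
    intro v hv
    rw [Finset.mem_image] at hv
    obtain ⟨j, hj, rfl⟩ := hv
    rw [ht, Finset.mem_filter] at hj
    have h1 : (n + j) % p < p := Nat.mod_lt _ (by omega)
    exact Finset.mem_range.mpr (by omega)
  have himcard : (t.image (fun j => (n + j) % p)).card = t.card :=
    Finset.card_image_of_injOn hinj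
  have hsum_t2 : ∑ v ∈ t.image (fun j => (n + j) % p), v
      ≤ ∑ j ∈ Finset.range t.card, (p - 2 - j) := by
    have := sum_subset_range (p - 1) _ himsub
    rw [himcard] at this
    calc ∑ v ∈ t.image (fun j => (n + j) % p), v
        ≤ ∑ j ∈ Finset.range t.card, (p - 1 - 1 - j) := this
      _ = ∑ j ∈ Finset.range t.card, (p - 2 - j) :=
        Finset.sum_congr rfl fun j _ => by omega
  -- combine
  have htotal : W p m n ≤ (p - 2) * s.card + ∑ j ∈ Finset.range t.card, (p - 2 - j) := by
    omega
  rcases Nat.le_one_iff_eq_zero_or_eq_one.mp hscard with h0 | h1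
  · -- no residue p-1 : t.card = m
    have htm : t.card = m := by omega
    rw [htm] at htotal
    have hm : m = (m - 1) + 1 := by omega
    have hpeel : ∑ j ∈ Finset.range ((m - 1) + 1), (p - 2 - j)
        = ∑ j ∈ Finset.range (m - 1), (p - 2 - (j + 1)) + (p - 2) := by
      rw [Finset.sum_range_succ' (fun j => p - 2 - j) (m - 1)]
      simp
    have hle2 : ∑ j ∈ Finset.range (m - 1), (p - 2 - (j + 1))
        ≤ ∑ j ∈ Finset.range (m - 1), (p - 2 - j) :=
      Finset.sum_le_sum fun j _ => by omega
    rw [h0] at htotal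
    rw [← hm] at hpeel
    rw [F]
    omega
  · have htm : t.card = m - 1 := by omega
    rw [htm, h1] at htotal
    rw [F]
    omega

lemma W_witness {p : ℕ} (hp : 3 ≤ p) {m : ℕ} (hm1 : 1 ≤ m) (hmp : m ≤ p) :
    W p m (p * p - p - m) = F p m := by
  have hsq : p * (p - 2) + 2 * p = p * p := by
    have h1 : p - 2 + 2 = p := by omega
    calc p * (p - 2) + 2 * p = p * ((p - 2) + 2) := by ring
      _ = p * p := by rw [h1]
  set n0 := p * p - p - m with hn0
  obtain ⟨m', rfl⟩ : ∃ m', m = m' + 1 := ⟨m - 1, by omega⟩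
  rw [W, Finset.sum_range_succ]
  -- last term : phifin p (n0 + m') = p - 2
  have hlast : n0 + m' = p * (p - 2) + (p - 1) := by omega
  have hmod : (p * (p - 2) + (p - 1)) % p = p - 1 := by
    rw [Nat.mul_add_mod]
    exact Nat.mod_eq_of_lt (by omega)
  have hdig0 : dig p (p * (p - 2) + (p - 1)) 0 = p - 1 := by
    rw [dig, pow_zero, Nat.div_one, hmod]
  have hdig1 : dig p (p * (p - 2) + (p - 1)) 1 = p - 2 := by
    rw [dig, pow_one, Nat.mul_add_div (by omega : 0 < p), Nat.div_eq_of_lt (by omega : p - 1 < p),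
      Nat.add_zero]
    exact Nat.mod_eq_of_lt (by omega)
  have hfN : fN p (p * (p - 2) + (p - 1)) = 1 := by
    have h1 : (1 : ℕ) ∈ {i | dig p (p * (p - 2) + (p - 1)) i ≠ p - 1} := by
      simp only [Set.mem_setOf_eq, hdig1]; omega
    have h0 : (0 : ℕ) ∉ {i | dig p (p * (p - 2) + (p - 1)) i ≠ p - 1} := by
      simp only [Set.mem_setOf_eq, hdig0, ne_eq, not_not]
    have hle : fN p (p * (p - 2) + (p - 1)) ≤ 1 := Nat.sInf_le h1
    have hmem := Nat.sInf_mem (⟨1, h1⟩ : {i | dig p (p * (p - 2) + (p - 1)) i ≠ p - 1}.Nonempty)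
    have hmem2 : dig p (p * (p - 2) + (p - 1)) (fN p (p * (p - 2) + (p - 1))) ≠ p - 1 := hmem
    rcases Nat.le_one_iff_eq_zero_or_eq_one.mp hle with hz | ho
    · rw [hz] at hmem2
      exact absurd hdig0 hmem2
    · exact ho
  have hlastval : phifin p (n0 + m') = p - 2 := by
    rw [hlast, phifin, hfN, hdig1]
  -- first terms
  have hterms : ∀ j < m', phifin p (n0 + j) = p - (m' + 1) + j := by
    intro j hj
    have hval : n0 + j = p * (p - 2) + (p - (m' + 1) + j) := by omega
    have hr : p - (m' + 1) + j < p - 1 := by omega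
    have hmodr : (n0 + j) % p = p - (m' + 1) + j := by
      rw [hval, Nat.mul_add_mod]
      exact Nat.mod_eq_of_lt (by omega)
    rw [phifin_of_mod hp (by rw [hmodr]; omega), hmodr]
  have hsum : ∑ j ∈ Finset.range m', phifin p (n0 + j)
      = ∑ j ∈ Finset.range m', (p - 2 - j) := by
    rw [← Finset.sum_range_reflect (fun j => p - 2 - j) m']
    refine Finset.sum_congr rfl fun j hj => ?_
    rw [hterms j (Finset.mem_range.mp hj)]
    have := Finset.mem_range.mp hj
    omega
  rw [hsum, hlastval, F]
  simp only [Nat.add_sub_cancel]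
  omega

lemma W_le {p : ℕ} (hp : 3 ≤ p) (m n : ℕ) : W p m n ≤ m * (p - 2) := by
  calc W p m n ≤ ∑ _j ∈ Finset.range m, (p - 2) :=
      Finset.sum_le_sum fun j _ => phifin_le hp _
    _ = m * (p - 2) := by rw [Finset.sum_const, Finset.card_range, smul_eq_mul]

lemma D_spec {p : ℕ} (hp : 3 ≤ p) (m : ℕ) :
    (∃ n, D p m = W p m n) ∧ ∀ n, W p m n ≤ D p m := by
  have hset : {j | pim p m j ≠ 0} = Set.range (W p m) := pim_support hp m
  have hne : (Set.range (W p m)).Nonempty := ⟨W p m 0, 0, rfl⟩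
  have hbdd : BddAbove (Set.range (W p m)) := by
    refine ⟨m * (p - 2), ?_⟩
    rintro j ⟨n, rfl⟩
    exact W_le hp m n
  constructor
  · have hmem : sSup (Set.range (W p m)) ∈ Set.range (W p m) := Nat.sSup_mem hne hbdd
    obtain ⟨n, hn⟩ := hmem
    exact ⟨n, by rw [D, hset, hn]⟩
  · intro n
    rw [D, hset]
    exact le_csSup hbdd ⟨n, rfl⟩

lemma W_succ (p m n : ℕ) : W p (m + 1) n = W p m n + phifin p (n + m) :=
  Finset.sum_range_succ _ m

lemma part_a {p : ℕ} (hp : 3 ≤ p) (j : ℕ) :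
    D p j ≤ D p (j + 1) ∧ D p (j + 1) - D p j ≤ p - 2 := by
  obtain ⟨⟨n1, hn1⟩, hub1⟩ := D_spec hp j
  obtain ⟨⟨n2, hn2⟩, hub2⟩ := D_spec hp (j + 1)
  constructor
  · calc D p j = W p j n1 := hn1
      _ ≤ W p (j + 1) n1 := by rw [W_succ]; omega
      _ ≤ D p (j + 1) := hub2 n1
  · have h1 : D p (j + 1) = W p j n2 + phifin p (n2 + j) := by rw [hn2, W_succ]
    have h2 : W p j n2 ≤ D p j := hub1 n2
    have h3 : phifin p (n2 + j) ≤ p - 2 := phifin_le hp _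
    omega

lemma D_eq_F {p : ℕ} (hp : 3 ≤ p) {m : ℕ} (hm1 : 1 ≤ m) (hmp : m ≤ p) :
    D p m = F p m := by
  obtain ⟨⟨n1, hn1⟩, hub⟩ := D_spec hp m
  apply le_antisymm
  · rw [hn1]; exact W_le_F hp hm1 hmp n1
  · rw [← W_witness hp hm1 hmp]; exact hub _

lemma part_b {p : ℕ} (hp : 3 ≤ p) {v : ℕ} (hv : v ≤ p - 2) :
    ∃ j : ℕ, D p (j + 1) - D p j = v := by
  refine ⟨p - 1 - v, ?_⟩
  set j := p - 1 - v with hj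
  have hj1 : 1 ≤ j := by omega
  have hjp : j ≤ p - 1 := by omega
  have hD1 : D p j = F p j := D_eq_F hp hj1 (by omega)
  have hD2 : D p (j + 1) = F p (j + 1) := D_eq_F hp (by omega) (by omega)
  have hF : F p (j + 1) = F p j + (p - 2 - (j - 1)) := by
    have h1 : ∑ i ∈ Finset.range j, (p - 2 - i)
        = ∑ i ∈ Finset.range (j - 1), (p - 2 - i) + (p - 2 - (j - 1)) := by
      conv_lhs => rw [show j = (j - 1) + 1 by omega]
      rw [Finset.sum_range_succ]
    rw [F, F]
    simp only [Nat.add_sub_cancel]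
    omega
  rw [hD1, hD2, hF]
  omega


/-- with `S_j = D_{j+1} - D_j`, one has `0 ≤ S_j ≤ p - 2` for all `j`
(in particular `D` is nondecreasing), and every value of `{0, 1, …, p-2}` is
attained by the sequence `(S_j)`. -/
theorem statement_12 (p : ℕ) (hp : 3 ≤ p) :
    (∀ j : ℕ, D p j ≤ D p (j + 1) ∧ D p (j + 1) - D p j ≤ p - 2) ∧
    (∀ v : ℕ, v ≤ p - 2 → ∃ j : ℕ, D p (j + 1) - D p j = v) := by
  exact ⟨fun j => part_a hp j, fun v hv => part_b hp hv⟩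

end Chacon
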